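/- Let q be a positive real number with q ≠ 1 and let k, l ≥ 2 be integers. Then q·(1−q)^{k+l−3} · Σ_{μ ⊢ k} Σ_{ν ⊢ l} ((−1)^{ℓ(μ)+ℓ(ν)}/(z_μ z_ν)) · Σ_{c, d} c·d·(1−q^{c−1})(1−q^{d−1})/(1−q^{c+d−1}) = (q−q²)^{k+l−3} · (1−q²) · {k−1}_q {l−1}_q / ({k+l−1}_q {k+l−2}_q {k+l−3}_q), where the inner sum runs over all parts c of μ and d of ν counted with multiplicity. -/

import Mathlib

open Finset

/-- `z_μ = ∏_j j^{m_j(μ)} · m_j(μ)!` where `m_j(μ)` is the number of parts of `μ`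
equal to `j`. -/
def zPartition {n : ℕ} (P : Nat.Partition n) : ℕ :=
  ∏ j ∈ P.parts.toFinset, j ^ (P.parts.count j) * (P.parts.count j).factorial

/-- The `q`-analog `{m}_q = (q^m - 1)/(q - 1)` of an integer `m`. -/
noncomputable def qAnalog (q : ℝ) (m : ℕ) : ℝ := (q ^ m - 1) / (q - 1)

/-- `z` as a function of a multiset. -/
def zM (s : Multiset ℕ) : ℕ :=
  ∏ j ∈ s.toFinset, j ^ (s.count j) * (s.count j).factorial

lemma zPartition_eq_zM {n : ℕ} (P : Nat.Partition n) : zPartition P = zM P.parts := rfl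

lemma zM_pos (s : Multiset ℕ) (hs : ∀ i ∈ s, 0 < i) : 0 < zM s := by
  apply Finset.prod_pos
  intro j hj
  have hj' : 0 < j := hs j (Multiset.mem_toFinset.mp hj)
  exact mul_pos (pow_pos hj' _) (Nat.factorial_pos _)

lemma zM_cons (c : ℕ) (s : Multiset ℕ) :
    zM (c ::ₘ s) = c * (s.count c + 1) * zM s := by
  unfold zM
  rw [Multiset.toFinset_cons]
  by_cases hc : c ∈ s.toFinset
  · rw [Finset.insert_eq_self.2 hc]
    rw [← Finset.mul_prod_erase _ _ hc, ← Finset.mul_prod_erase _ _ hc]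
    have hprod : ∏ j ∈ s.toFinset.erase c,
        j ^ ((c ::ₘ s).count j) * ((c ::ₘ s).count j).factorial
        = ∏ j ∈ s.toFinset.erase c, j ^ (s.count j) * (s.count j).factorial := by
      apply Finset.prod_congr rfl
      intro j hj
      have hne : j ≠ c := Finset.ne_of_mem_erase hj
      rw [Multiset.count_cons_of_ne hne]
    rw [hprod, Multiset.count_cons_self]
    rw [Nat.factorial_succ, pow_succ]
    ring
  · rw [Finset.prod_insert hc]
    have hcs : c ∉ s := fun h => hc (Multiset.mem_toFinset.mpr h)
    have hc0 : s.count c = 0 := Multiset.count_eq_zero.mpr hcs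
    have hprod : ∏ j ∈ s.toFinset,
        j ^ ((c ::ₘ s).count j) * ((c ::ₘ s).count j).factorial
        = ∏ j ∈ s.toFinset, j ^ (s.count j) * (s.count j).factorial := by
      apply Finset.prod_congr rfl
      intro j hj
      have hne : j ≠ c := by rintro rfl; exact hc hj
      rw [Multiset.count_cons_of_ne hne]
    rw [hprod, Multiset.count_cons_self, hc0]
    simp [Nat.factorial]

lemma zPartition_pos {n : ℕ} (P : Nat.Partition n) : 0 < zPartition P := by
  rw [zPartition_eq_zM]
  exact zM_pos _ (fun i hi => P.parts_pos hi)

/-- The weight `(-1)^{ℓ(μ)}/z_μ`. -/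
noncomputable def wP {n : ℕ} (μ : Nat.Partition n) : ℝ :=
  (-1) ^ (Multiset.card μ.parts) / (zPartition μ : ℝ)

/-- `A n = Σ_{μ ⊢ n} (-1)^{ℓ(μ)}/z_μ`. -/
noncomputable def AP (n : ℕ) : ℝ := ∑ μ : Nat.Partition n, wP μ

lemma sum_wP_count (n c : ℕ) (hc : 1 ≤ c) (hcn : c ≤ n) :
    ∑ μ : Nat.Partition n, wP μ * (μ.parts.count c : ℝ)
      = -(1 / c) * AP (n - c) := by
  classical
  rw [← Finset.sum_filter_add_sum_filter_not Finset.univ (fun μ => c ∈ μ.parts)]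
  have h2 : ∑ μ ∈ Finset.univ.filter (fun μ : Nat.Partition n => ¬ c ∈ μ.parts),
      wP μ * (μ.parts.count c : ℝ) = 0 := by
    apply Finset.sum_eq_zero
    intro μ hμ
    have : c ∉ μ.parts := (Finset.mem_filter.mp hμ).2
    rw [Multiset.count_eq_zero.mpr this]
    simp
  rw [h2, add_zero, AP, Finset.mul_sum]
  refine Finset.sum_bij'
    (i := fun μ hμ => (⟨μ.parts.erase c,
      fun hi => μ.parts_pos (Multiset.mem_of_mem_erase hi), by
        have hc' : c ∈ μ.parts := (Finset.mem_filter.mp hμ).2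
        have h := congrArg Multiset.sum (Multiset.cons_erase hc')
        rw [Multiset.sum_cons, μ.parts_sum] at h
        omega⟩ : Nat.Partition (n - c)))
    (j := fun ν hν => (⟨c ::ₘ ν.parts,
      fun hi => by
        rcases Multiset.mem_cons.mp hi with h | h
        · omega
        · exact ν.parts_pos h, by
        rw [Multiset.sum_cons, ν.parts_sum]; omega⟩ : Nat.Partition n))
    ?_ ?_ ?_ ?_ ?_
  · intro a ha; exact Finset.mem_univ _
  · intro a ha
    simp only [Finset.mem_filter, Finset.mem_univ, true_and]
    exact Multiset.mem_cons_self _ _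
  · intro a ha
    apply Nat.Partition.ext
    simp only
    exact Multiset.cons_erase (Finset.mem_filter.mp ha).2
  · intro a ha
    apply Nat.Partition.ext
    simp only
    exact Multiset.erase_cons_head _ _
  · intro μ hμ
    have hc' : c ∈ μ.parts := (Finset.mem_filter.mp hμ).2
    set s := μ.parts.erase c with hs
    have hparts : μ.parts = c ::ₘ s := (Multiset.cons_erase hc').symm
    have hz : zPartition μ = c * (s.count c + 1) * zM s := by
      rw [zPartition_eq_zM, hparts, zM_cons]
    have hcard : Multiset.card μ.parts = Multiset.card s + 1 := by
      rw [hparts, Multiset.card_cons]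
    have hcount : μ.parts.count c = s.count c + 1 := by
      rw [hparts, Multiset.count_cons_self]
    have hzs : (0:ℝ) < zM s := by
      exact_mod_cast zM_pos s (fun i hi => μ.parts_pos (hparts ▸ Multiset.mem_cons_of_mem hi))
    have hc0 : (0:ℝ) < c := by exact_mod_cast hc
    have hm : (0:ℝ) < (s.count c : ℝ) + 1 := by positivity
    unfold wP
    rw [hz, hcard, hcount]
    simp only [zPartition_eq_zM]
    push_cast
    rw [pow_succ]
    field_simp
    rw [← hs]
    field_simp

lemma sum_wP_map (n : ℕ) (hn : 1 ≤ n) (f : ℕ → ℝ) :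
    ∑ μ : Nat.Partition n, wP μ * (μ.parts.map f).sum
      = -∑ c ∈ Finset.Icc 1 n, (f c / c) * AP (n - c) := by
  classical
  have hmap : ∀ μ : Nat.Partition n,
      (μ.parts.map f).sum = ∑ c ∈ Finset.Icc 1 n, (μ.parts.count c : ℝ) * f c := by
    intro μ
    rw [Finset.sum_multiset_map_count]
    have hsub : μ.parts.toFinset ⊆ Finset.Icc 1 n := by
      intro j hj
      have hj' : j ∈ μ.parts := Multiset.mem_toFinset.mp hj
      have h1 : 1 ≤ j := μ.parts_pos hj'
      have h2 : j ≤ n := by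
        have := Multiset.single_le_sum (fun x _ => Nat.zero_le x) j hj'
        have hps := μ.parts_sum
        omega
      exact Finset.mem_Icc.mpr ⟨h1, h2⟩
    rw [Finset.sum_subset hsub (fun j _ hj => by
      rw [Multiset.count_eq_zero.mpr (fun h => hj (Multiset.mem_toFinset.mpr h))]
      simp)]
    apply Finset.sum_congr rfl
    intro j _
    rw [nsmul_eq_mul]
  calc ∑ μ : Nat.Partition n, wP μ * (μ.parts.map f).sum
      = ∑ μ : Nat.Partition n, ∑ c ∈ Finset.Icc 1 n,
          wP μ * ((μ.parts.count c : ℝ) * f c) := by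
        apply Finset.sum_congr rfl
        intro μ _
        rw [hmap, Finset.mul_sum]
    _ = ∑ c ∈ Finset.Icc 1 n, ∑ μ : Nat.Partition n,
          wP μ * ((μ.parts.count c : ℝ) * f c) := Finset.sum_comm
    _ = -∑ c ∈ Finset.Icc 1 n, (f c / c) * AP (n - c) := by
        rw [← Finset.sum_neg_distrib]
        apply Finset.sum_congr rfl
        intro c hc
        obtain ⟨hc1, hc2⟩ := Finset.mem_Icc.mp hc
        have key := sum_wP_count n c hc1 hc2
        have : ∑ μ : Nat.Partition n, wP μ * ((μ.parts.count c : ℝ) * f c)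
            = (∑ μ : Nat.Partition n, wP μ * (μ.parts.count c : ℝ)) * f c := by
          rw [Finset.sum_mul]
          apply Finset.sum_congr rfl
          intro μ _
          ring
        rw [this, key]
        ring

lemma partition_zero_parts (μ : Nat.Partition 0) : μ.parts = 0 := by
  by_contra h
  obtain ⟨a, ha⟩ := Multiset.exists_mem_of_ne_zero h
  have h1 := μ.parts_pos ha
  have h2 := Multiset.single_le_sum (fun x _ => Nat.zero_le x) a ha
  rw [μ.parts_sum] at h2
  omega

lemma partition_one_parts (μ : Nat.Partition 1) : μ.parts = {1} := by
  have hsum := μ.parts_sum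
  obtain ⟨a, ha⟩ := Multiset.exists_mem_of_ne_zero
    (s := μ.parts) (by intro h; rw [h] at hsum; simp at hsum)
  have ha1 : a = 1 := by
    have h1 := μ.parts_pos ha
    have h2 := Multiset.single_le_sum (fun x _ => Nat.zero_le x) a ha
    omega
  subst ha1
  have hcons := Multiset.cons_erase ha
  have hz : μ.parts.erase 1 = 0 := by
    have h := congrArg Multiset.sum hcons
    rw [Multiset.sum_cons, hsum] at h
    have hs0 : (μ.parts.erase 1).sum = 0 := by omega
    by_contra hne
    obtain ⟨b, hb⟩ := Multiset.exists_mem_of_ne_zero hne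
    have hb1 := μ.parts_pos (Multiset.mem_of_mem_erase hb)
    have hb2 := Multiset.single_le_sum (fun x _ => Nat.zero_le x) b hb
    omega
  rw [← hcons, hz]
  rfl

lemma zM_zero : zM 0 = 1 := by simp [zM]

lemma zM_one : zM {1} = 1 := by
  unfold zM
  rw [show ({1} : Multiset ℕ).toFinset = {1} from rfl]
  simp

lemma AP_zero : AP 0 = 1 := by
  have huniv : (Finset.univ : Finset (Nat.Partition 0)) = {⟨0, by simp, by simp⟩} := by
    apply Finset.eq_singleton_iff_unique_mem.mpr
    refine ⟨Finset.mem_univ _, fun μ _ => ?_⟩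
    apply Nat.Partition.ext
    exact partition_zero_parts μ
  rw [AP, huniv, Finset.sum_singleton]
  unfold wP
  rw [zPartition_eq_zM]
  simp [zM_zero]

lemma AP_one : AP 1 = -1 := by
  have huniv : (Finset.univ : Finset (Nat.Partition 1)) =
      {⟨{1}, by intro i hi; simp at hi; omega, by simp⟩} := by
    apply Finset.eq_singleton_iff_unique_mem.mpr
    refine ⟨Finset.mem_univ _, fun μ _ => ?_⟩
    apply Nat.Partition.ext
    exact partition_one_parts μ
  rw [AP, huniv, Finset.sum_singleton]
  unfold wP
  rw [zPartition_eq_zM]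
  simp [zM_one]

lemma multiset_cast_sum (s : Multiset ℕ) :
    (s.map (fun c : ℕ => (c : ℝ))).sum = (s.sum : ℝ) := by
  induction s using Multiset.induction with
  | empty => simp
  | cons a s ih =>
    rw [Multiset.map_cons, Multiset.sum_cons, Multiset.sum_cons, ih]
    push_cast
    ring

lemma AP_eq_zero : ∀ n, 2 ≤ n → AP n = 0 := by
  intro n
  induction n using Nat.strong_induction_on with
  | _ n ih =>
    intro hn
    have key := sum_wP_map n (by omega) (fun c : ℕ => (c : ℝ))
    have hlhs : ∑ μ : Nat.Partition n, wP μ * (Multiset.map (fun c : ℕ => (c : ℝ)) μ.parts).sum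
        = (n : ℝ) * AP n := by
      rw [AP, Finset.mul_sum]
      apply Finset.sum_congr rfl
      intro μ _
      rw [multiset_cast_sum, μ.parts_sum]
      ring
    rw [hlhs] at key
    have hsub : ({n - 1, n} : Finset ℕ) ⊆ Finset.Icc 1 n := by
      intro x hx
      simp only [Finset.mem_insert, Finset.mem_singleton] at hx
      rcases hx with rfl | rfl <;> exact Finset.mem_Icc.mpr ⟨by omega, by omega⟩
    have hzero : ∀ x ∈ Finset.Icc 1 n, x ∉ ({n - 1, n} : Finset ℕ) →
        ((x : ℝ) / x) * AP (n - x) = 0 := by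
      intro x hx hx'
      obtain ⟨h1, h2⟩ := Finset.mem_Icc.mp hx
      simp only [Finset.mem_insert, Finset.mem_singleton] at hx'
      push_neg at hx'
      rw [ih (n - x) (by omega) (by omega), mul_zero]
    rw [← Finset.sum_subset hsub hzero, Finset.sum_pair (by omega : n - 1 ≠ n)] at key
    rw [show n - (n - 1) = 1 by omega, Nat.sub_self, AP_zero, AP_one] at key
    have h1 : ((n - 1 : ℕ) : ℝ) / ((n - 1 : ℕ) : ℝ) = 1 := by
      apply div_self
      have : 1 ≤ n - 1 := by omega
      positivity
    have h2 : ((n : ℕ) : ℝ) / ((n : ℕ) : ℝ) = 1 := by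
      apply div_self
      have : 1 ≤ n := by omega
      positivity
    rw [h1, h2] at key
    have hn0 : (n : ℝ) ≠ 0 := by positivity
    have : (n : ℝ) * AP n = 0 := by rw [key]; ring
    exact (mul_eq_zero.mp this).resolve_left hn0

lemma reduce (n : ℕ) (hn : 2 ≤ n) (f : ℕ → ℝ) :
    ∑ μ : Nat.Partition n, wP μ * (μ.parts.map f).sum
      = f (n - 1) / ((n - 1 : ℕ) : ℝ) - f n / (n : ℝ) := by
  rw [sum_wP_map n (by omega) f]
  have hsub : ({n - 1, n} : Finset ℕ) ⊆ Finset.Icc 1 n := by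
    intro x hx
    simp only [Finset.mem_insert, Finset.mem_singleton] at hx
    rcases hx with rfl | rfl <;> exact Finset.mem_Icc.mpr ⟨by omega, by omega⟩
  have hzero : ∀ x ∈ Finset.Icc 1 n, x ∉ ({n - 1, n} : Finset ℕ) →
      (f x / x) * AP (n - x) = 0 := by
    intro x hx hx'
    obtain ⟨h1, h2⟩ := Finset.mem_Icc.mp hx
    simp only [Finset.mem_insert, Finset.mem_singleton] at hx'
    push_neg at hx'
    rw [AP_eq_zero (n - x) (by omega), mul_zero]
  rw [← Finset.sum_subset hsub hzero, Finset.sum_pair (by omega : n - 1 ≠ n)]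
  rw [show n - (n - 1) = 1 by omega, Nat.sub_self, AP_zero, AP_one]
  ring

lemma multiset_sum_finset_sum {α β : Type*} (s : Multiset α) (t : Finset β)
    (h : β → α → ℝ) :
    ∑ b ∈ t, (s.map (h b)).sum = (s.map (fun a => ∑ b ∈ t, h b a)).sum := by
  induction s using Multiset.induction with
  | empty => simp
  | cons a s ih => simp [Finset.sum_add_distrib, ih]

set_option maxHeartbeats 2000000 in
theorem covariance_double_partition_sum
    (q : ℝ) (hq0 : 0 < q) (hq1 : q ≠ 1) (k l : ℕ) (hk : 2 ≤ k) (hl : 2 ≤ l) :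
    q * (1 - q) ^ (k + l - 3) *
        ∑ μ : Nat.Partition k, ∑ ν : Nat.Partition l,
          ((-1 : ℝ) ^ (Multiset.card μ.parts + Multiset.card ν.parts) /
              ((zPartition μ : ℝ) * (zPartition ν : ℝ))) *
            (μ.parts.map (fun c =>
              (ν.parts.map (fun d =>
                (c : ℝ) * (d : ℝ) * (1 - q ^ (c - 1)) * (1 - q ^ (d - 1)) /
                  (1 - q ^ (c + d - 1)))).sum)).sum
      = (q - q ^ 2) ^ (k + l - 3) * (1 - q ^ 2) *
          (qAnalog q (k - 1) * qAnalog q (l - 1)) /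
          (qAnalog q (k + l - 1) * qAnalog q (k + l - 2) * qAnalog q (k + l - 3)) := by
  obtain ⟨a, rfl⟩ : ∃ a, k = a + 2 := ⟨k - 2, by omega⟩
  obtain ⟨b, rfl⟩ : ∃ b, l = b + 2 := ⟨l - 2, by omega⟩
  simp only [Multiset.pure_def, Multiset.bind_def, Multiset.bind_singleton,
    Multiset.map_map, Function.comp_apply]
  set g : ℕ → ℝ := fun c =>
    ((c : ℝ) * ((b + 1 : ℕ) : ℝ) * (1 - q ^ ((c : ℝ) - 1)) *
        (1 - q ^ (((b + 1 : ℕ) : ℝ) - 1)) /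
        (1 - q ^ ((c : ℝ) + ((b + 1 : ℕ) : ℝ) - 1))) / ((b + 1 : ℕ) : ℝ) -
    ((c : ℝ) * ((b + 2 : ℕ) : ℝ) * (1 - q ^ ((c : ℝ) - 1)) *
        (1 - q ^ (((b + 2 : ℕ) : ℝ) - 1)) /
        (1 - q ^ ((c : ℝ) + ((b + 2 : ℕ) : ℝ) - 1))) / ((b + 2 : ℕ) : ℝ) with hg
  have step1 : ∀ μ : Nat.Partition (a + 2),
      ∑ ν : Nat.Partition (b + 2),
        ((-1 : ℝ) ^ (Multiset.card μ.parts + Multiset.card ν.parts) /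
            ((zPartition μ : ℝ) * (zPartition ν : ℝ))) *
          (Multiset.map (fun c : ℕ => (Multiset.map (fun d : ℕ =>
            (c : ℝ) * (d : ℝ) * (1 - q ^ ((c : ℝ) - 1)) * (1 - q ^ ((d : ℝ) - 1)) /
              (1 - q ^ ((c : ℝ) + (d : ℝ) - 1))) ν.parts).sum) μ.parts).sum
      = wP μ * (Multiset.map g μ.parts).sum := by
    intro μ
    have e1 : ∀ ν : Nat.Partition (b + 2),
        ((-1 : ℝ) ^ (Multiset.card μ.parts + Multiset.card ν.parts) /
            ((zPartition μ : ℝ) * (zPartition ν : ℝ))) *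
          (Multiset.map (fun c : ℕ => (Multiset.map (fun d : ℕ =>
            (c : ℝ) * (d : ℝ) * (1 - q ^ ((c : ℝ) - 1)) * (1 - q ^ ((d : ℝ) - 1)) /
              (1 - q ^ ((c : ℝ) + (d : ℝ) - 1))) ν.parts).sum) μ.parts).sum
        = wP μ * ((Multiset.map (fun c : ℕ =>
            wP ν * (Multiset.map (fun d : ℕ =>
            (c : ℝ) * (d : ℝ) * (1 - q ^ ((c : ℝ) - 1)) * (1 - q ^ ((d : ℝ) - 1)) /
              (1 - q ^ ((c : ℝ) + (d : ℝ) - 1))) ν.parts).sum) μ.parts).sum) := by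
      intro ν
      unfold wP
      rw [pow_add, mul_div_mul_comm]
      rw [Multiset.sum_map_mul_left]
      ring
    rw [Finset.sum_congr rfl (fun ν _ => e1 ν), ← Finset.mul_sum]
    congr 1
    rw [multiset_sum_finset_sum]
    apply congrArg
    apply Multiset.map_congr rfl
    intro c _
    exact reduce (b + 2) hl (fun d : ℕ =>
      (c : ℝ) * (d : ℝ) * (1 - q ^ ((c : ℝ) - 1)) * (1 - q ^ ((d : ℝ) - 1)) /
        (1 - q ^ ((c : ℝ) + (d : ℝ) - 1)))
  rw [Finset.sum_congr rfl (fun μ _ => step1 μ)]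
  rw [reduce (a + 2) hk g]
  simp only [hg]
  have e1 : a + 2 + (b + 2) - 3 = a + b + 1 := by omega
  have e2 : a + 2 + (b + 2) - 1 = a + b + 3 := by omega
  have e3 : a + 2 + (b + 2) - 2 = a + b + 2 := by omega
  have e9 : a + 2 - 1 = a + 1 := by omega
  have e11 : b + 2 - 1 = b + 1 := by omega
  rw [e1, e2, e3]
  simp only [e9, e11]
  have x1 : ((a + 1 : ℕ) : ℝ) - 1 = ((a : ℕ) : ℝ) := by push_cast; ring
  have x2 : ((a + 2 : ℕ) : ℝ) - 1 = ((a + 1 : ℕ) : ℝ) := by push_cast; ring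
  have x3 : ((b + 1 : ℕ) : ℝ) - 1 = ((b : ℕ) : ℝ) := by push_cast; ring
  have x4 : ((b + 2 : ℕ) : ℝ) - 1 = ((b + 1 : ℕ) : ℝ) := by push_cast; ring
  have y1 : ((a + 1 : ℕ) : ℝ) + ((b + 1 : ℕ) : ℝ) - 1 = ((a + b + 1 : ℕ) : ℝ) := by
    push_cast; ring
  have y2 : ((a + 1 : ℕ) : ℝ) + ((b + 2 : ℕ) : ℝ) - 1 = ((a + b + 2 : ℕ) : ℝ) := by
    push_cast; ring
  have y3 : ((a + 2 : ℕ) : ℝ) + ((b + 1 : ℕ) : ℝ) - 1 = ((a + b + 2 : ℕ) : ℝ) := by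
    push_cast; ring
  have y4 : ((a + 2 : ℕ) : ℝ) + ((b + 2 : ℕ) : ℝ) - 1 = ((a + b + 3 : ℕ) : ℝ) := by
    push_cast; ring
  simp only [y1, y2, y3, y4, x1, x2, x3, x4, Real.rpow_natCast]
  have hq1' : q - 1 ≠ 0 := sub_ne_zero.mpr hq1
  have hqne : (q : ℝ) ≠ 0 := ne_of_gt hq0
  have hpow : ∀ m : ℕ, q ^ (m + 1) ≠ 1 := by
    intro m
    rcases lt_or_gt_of_ne hq1 with h | h
    · exact ne_of_lt (pow_lt_one₀ hq0.le h m.succ_ne_zero)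
    · exact ne_of_gt (one_lt_pow₀ h m.succ_ne_zero)
  have p1 : q ^ (a + 1) = q ^ a * q := pow_succ q a
  have p2 : q ^ (b + 1) = q ^ b * q := pow_succ q b
  have p3 : q ^ (a + b + 1) = q ^ a * q ^ b * q := by
    rw [pow_add, pow_add, pow_one]
  have p4 : q ^ (a + b + 2) = q ^ a * q ^ b * q ^ 2 := by
    rw [pow_add, pow_add]
  have p5 : q ^ (a + b + 3) = q ^ a * q ^ b * q ^ 3 := by
    rw [pow_add, pow_add]
  have p6 : (q - q ^ 2) ^ (a + b + 1) = q ^ a * q ^ b * q * (1 - q) ^ (a + b + 1) := by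
    rw [show q - q ^ 2 = q * (1 - q) by ring, mul_pow, p3]
  have d1 : 1 - q ^ a * q ^ b * q ≠ 0 := by
    rw [← p3]; exact sub_ne_zero.mpr (Ne.symm (hpow (a + b)))
  have d2 : 1 - q ^ a * q ^ b * q ^ 2 ≠ 0 := by
    rw [← p4]; exact sub_ne_zero.mpr (Ne.symm (hpow (a + b + 1)))
  have d3 : 1 - q ^ a * q ^ b * q ^ 3 ≠ 0 := by
    rw [← p5]; exact sub_ne_zero.mpr (Ne.symm (hpow (a + b + 2)))
  have d1' : q ^ a * q ^ b * q - 1 ≠ 0 := by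
    intro h; exact d1 (by linarith [sub_eq_zero.mp h])
  have d2' : q ^ a * q ^ b * q ^ 2 - 1 ≠ 0 := by
    intro h; exact d2 (by linarith [sub_eq_zero.mp h])
  have d3' : q ^ a * q ^ b * q ^ 3 - 1 ≠ 0 := by
    intro h; exact d3 (by linarith [sub_eq_zero.mp h])
  unfold qAnalog
  rw [p6]
  simp only [p1, p2, p3, p4, p5]
  have c1 : ((a + 1 : ℕ) : ℝ) ≠ 0 := by positivity
  have c2 : ((a + 2 : ℕ) : ℝ) ≠ 0 := by positivity
  have c3 : ((b + 1 : ℕ) : ℝ) ≠ 0 := by positivity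
  have c4 : ((b + 2 : ℕ) : ℝ) ≠ 0 := by positivity
  push_cast at c1 c2 c3 c4 ⊢
  field_simp
  have f1 : 1 - q * q ^ a * q ^ b ≠ 0 := by rwa [show q * q ^ a * q ^ b = q ^ a * q ^ b * q by ring]
  have f2 : 1 - q ^ 2 * q ^ a * q ^ b ≠ 0 := by
    rwa [show q ^ 2 * q ^ a * q ^ b = q ^ a * q ^ b * q ^ 2 by ring]
  have f3 : 1 - q ^ 3 * q ^ a * q ^ b ≠ 0 := by
    rwa [show q ^ 3 * q ^ a * q ^ b = q ^ a * q ^ b * q ^ 3 by ring]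
  have f1' : q * q ^ a * q ^ b - 1 ≠ 0 := by rwa [show q * q ^ a * q ^ b = q ^ a * q ^ b * q by ring]
  have f2' : q ^ 2 * q ^ a * q ^ b - 1 ≠ 0 := by
    rwa [show q ^ 2 * q ^ a * q ^ b = q ^ a * q ^ b * q ^ 2 by ring]
  have f3' : q ^ 3 * q ^ a * q ^ b - 1 ≠ 0 := by
    rwa [show q ^ 3 * q ^ a * q ^ b = q ^ a * q ^ b * q ^ 3 by ring]
  field_simp
  ring
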